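/- For each m ≥ 0 and i, the differential operator J_i^+ (without exchange terms) defined by (J_i^+ f) = z_i^2 ∂f/∂z_i − m z_i f maps the rectangular module R_m (polynomials of degree at most m in each variable) into itself, but for n ≠ m it does not map R_n into itself (for N ≥ 1). -/

import Mathlib

open MvPolynomial

lemma Jplus_monomial {F : Type*} [Field F] {N : ℕ} (i : Fin N) (m : ℕ)
    (u : Fin N →₀ ℕ) (a : F) :
    X i ^ 2 * pderiv i (monomial u a) - (m : F) • (X i * (monomial u a)) =
      monomial (u + Finsupp.single i 1) (((u i : F) - m) * a) := by
  rw [pderiv_monomial, X_pow_eq_monomial, monomial_mul, X, monomial_mul,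
    smul_monomial]
  rcases Nat.eq_zero_or_pos (u i) with h | h
  · rw [h]
    simp only [Nat.cast_zero, mul_zero, map_zero, zero_sub, one_mul]
    rw [add_comm, smul_eq_mul, ← map_neg, neg_mul]
  · have hkey : Finsupp.single i 2 + (u - Finsupp.single i 1) =
        u + Finsupp.single i 1 := by
      ext j
      rcases eq_or_ne j i with rfl | hj
      · simp only [Finsupp.add_apply, Finsupp.single_eq_same, Finsupp.tsub_apply]
        omega
      · simp [Finsupp.single_eq_of_ne' (Ne.symm hj)]
    rw [hkey, add_comm (Finsupp.single i 1) u, ← map_sub]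
    congr 1
    rw [smul_eq_mul]
    ring

lemma Jplus_eq_sum {F : Type*} [Field F] {N : ℕ} (i : Fin N) (m : ℕ)
    (f : MvPolynomial (Fin N) F) :
    X i ^ 2 * pderiv i f - (m : F) • (X i * f) =
      ∑ d ∈ f.support, monomial (d + Finsupp.single i 1)
        (((d i : F) - m) * coeff d f) := by
  conv_lhs => rw [f.as_sum]
  rw [map_sum, Finset.mul_sum, Finset.mul_sum, Finset.smul_sum,
    ← Finset.sum_sub_distrib]
  exact Finset.sum_congr rfl fun d _ => Jplus_monomial i m d (coeff d f)

theorem Jplus_preserves_only_Rm {F : Type*} [Field F] [CharZero F] {N : ℕ}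
    (hN : 1 ≤ N) (m : ℕ) (i : Fin N) :
    (∀ f : MvPolynomial (Fin N) F, (∀ k, f.degreeOf k ≤ m) →
      ∀ k, (X i ^ 2 * pderiv i f - (m : F) • (X i * f)).degreeOf k ≤ m) ∧
    (∀ n : ℕ, n ≠ m →
      ∃ f : MvPolynomial (Fin N) F, (∀ k, f.degreeOf k ≤ n) ∧
        ¬ (∀ k, (X i ^ 2 * pderiv i f - (m : F) • (X i * f)).degreeOf k ≤ n)) := by
  constructor
  · intro f hf k
    rw [Jplus_eq_sum]
    refine (degreeOf_sum_le _ _ _).trans (Finset.sup_le fun d hd => ?_)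
    rcases eq_or_ne (((d i : F) - m) * coeff d f) 0 with h0 | h0
    · rw [h0, map_zero, degreeOf_zero]; exact Nat.zero_le _
    · classical
      rw [degreeOf_monomial_eq _ _ h0]
      have hdk : ∀ k', d k' ≤ m := fun k' =>
        (monomial_le_degreeOf k' hd).trans (hf k')
      rcases eq_or_ne k i with rfl | hk
      · have hne : (d k : F) ≠ (m : F) := fun h => h0 (by rw [h, sub_self, zero_mul])
        have : d k ≠ m := fun h => hne (by rw [h])
        have : d k < m := lt_of_le_of_ne (hdk k) this
        simp only [Finsupp.add_apply, Finsupp.single_eq_same]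
        omega
      · simp only [Finsupp.add_apply, Finsupp.single_eq_of_ne' (Ne.symm hk), add_zero]
        exact hdk k
  · intro n hn
    refine ⟨X i ^ n, fun k => (degreeOf_pow_le _ _ _).trans ?_, ?_⟩
    · classical
      rw [degreeOf_X]
      rcases eq_or_ne k i with rfl | hk
      · simp
      · simp [hk]
    · intro h
      have := h i
      have hXp : (X i ^ n : MvPolynomial (Fin N) F) =
          monomial (Finsupp.single i n) 1 := X_pow_eq_monomial ..
      rw [hXp, Jplus_eq_sum] at this
      classical
      rw [support_monomial, if_neg (one_ne_zero)] at this
      rw [Finset.sum_singleton, coeff_monomial, if_pos rfl,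
        Finsupp.single_eq_same, mul_one, ← Finsupp.single_add] at this
      have hc : ((n : F) - m) ≠ 0 := by
        rw [sub_ne_zero]
        exact_mod_cast hn
      rw [degreeOf_monomial_eq _ _ hc, Finsupp.single_eq_same] at this
      omega
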